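/- Let K ⊆ ℝ^d be a convex body and ν a probability measure with density f supported on K with ν_min := inf_{x∈K} f(x) > 0. There is a constant δ = δ(K, ν) such that if r_n ≥ δ(ln n / n)^{1/d}, and X₁, ..., X_n are i.i.d. samples from ν, then with probability tending to 1 as n → ∞, K ⊆ ⋃_{i=1}^n B(X_i, r_n). -/

import Mathlib

open Metric MeasureTheory Filter

-- geometry: scaled ball inside K ∩ ball
lemma cone_ball {d : ℕ} {K : Set (EuclideanSpace ℝ (Fin d))}
    (hKconv : Convex ℝ K) {x₀ : EuclideanSpace ℝ (Fin d)} {ρ R' : ℝ} (hρ : 0 < ρ)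
    (hball : ball x₀ ρ ⊆ K) (hR' : ∀ x ∈ K, dist x x₀ ≤ R')
    {z : EuclideanSpace ℝ (Fin d)} (hz : z ∈ K) {u : ℝ} (hu : 0 < u)
    (hus : u ≤ ρ + R' + 1) :
    ball (z + (u / (ρ + R' + 1)) • (x₀ - z)) ((u / (ρ + R' + 1)) * ρ) ⊆ K ∩ ball z u := by
  have hR'0 : 0 ≤ R' := le_trans (dist_nonneg) (hR' z hz)
  have hs₀ : 0 < ρ + R' + 1 := by linarith
  set t := u / (ρ + R' + 1) with ht_def
  have ht0 : 0 < t := div_pos hu hs₀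
  have ht1 : t ≤ 1 := by rw [ht_def, div_le_one hs₀]; linarith
  intro y hy
  rw [mem_ball, dist_eq_norm] at hy
  constructor
  · -- y ∈ K
    set w := x₀ + t⁻¹ • (y - (z + t • (x₀ - z))) with hw_def
    have hwK : w ∈ K := by
      apply hball
      rw [mem_ball, dist_eq_norm]
      have : w - x₀ = t⁻¹ • (y - (z + t • (x₀ - z))) := by rw [hw_def]; abel
      rw [show w - x₀ = t⁻¹ • (y - (z + t • (x₀ - z))) from this, norm_smul,
        Real.norm_eq_abs, abs_inv, abs_of_pos ht0]
      rw [inv_mul_lt_iff₀ ht0]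
      calc ‖y - (z + t • (x₀ - z))‖ < t * ρ := hy
        _ = t * ρ := rfl
    have hyK : (1 - t) • z + t • w ∈ K :=
      hKconv hz hwK (by linarith) ht0.le (by ring)
    have : y = (1 - t) • z + t • w := by
      rw [hw_def, smul_add, smul_smul, mul_inv_cancel₀ ht0.ne', one_smul]
      module
    rwa [this]
  · -- y ∈ ball z u
    rw [mem_ball, dist_eq_norm]
    have h1 : y - z = (y - (z + t • (x₀ - z))) + t • (x₀ - z) := by abel
    have h2 : ‖y - z‖ ≤ ‖y - (z + t • (x₀ - z))‖ + ‖t • (x₀ - z)‖ := by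
      rw [h1]; exact norm_add_le _ _
    have h3 : ‖t • (x₀ - z)‖ = t * ‖x₀ - z‖ := by
      rw [norm_smul, Real.norm_eq_abs, abs_of_pos ht0]
    have h4 : ‖x₀ - z‖ ≤ R' := by
      rw [show ‖x₀ - z‖ = dist z x₀ by rw [dist_eq_norm, norm_sub_rev]]
      exact hR' z hz
    have : ‖y - z‖ < t * ρ + t * R' := by
      calc ‖y - z‖ ≤ ‖y - (z + t • (x₀ - z))‖ + t * ‖x₀ - z‖ := by rw [← h3]; exact h2
        _ < t * ρ + t * R' := by
            have := mul_le_mul_of_nonneg_left h4 ht0.le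
            linarith
    calc ‖y - z‖ < t * ρ + t * R' := this
      _ ≤ t * (ρ + R' + 1) := by nlinarith
      _ = u := by rw [ht_def]; field_simp

lemma nu_lower {d : ℕ} {K : Set (EuclideanSpace ℝ (Fin d))} (hKcl : IsClosed K)
    {f : EuclideanSpace ℝ (Fin d) → ENNReal}
    {ν : Measure (EuclideanSpace ℝ (Fin d))} (hν : ν = volume.withDensity f)
    {νm : ENNReal} (hlow : ∀ x ∈ K, νm ≤ f x) (A : Set (EuclideanSpace ℝ (Fin d)))
    (hA : MeasurableSet A) :
    νm * volume (K ∩ A) ≤ ν A := by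
  rw [hν, withDensity_apply f hA]
  calc νm * volume (K ∩ A) = ∫⁻ _ in K ∩ A, νm ∂volume := by
        rw [setLIntegral_const]
    _ ≤ ∫⁻ x in K ∩ A, f x ∂volume := by
        apply setLIntegral_mono' (hKcl.measurableSet.inter hA)
        exact fun x hx => hlow x hx.1
    _ ≤ ∫⁻ x in A, f x ∂volume := lintegral_mono_set Set.inter_subset_right

-- coordinate bound
lemma coord_le_norm {d : ℕ} (x : EuclideanSpace ℝ (Fin d)) (i : Fin d) : |x i| ≤ ‖x‖ := by
  rw [EuclideanSpace.norm_eq]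
  rw [show |x i| = Real.sqrt (‖x i‖ ^ 2) by rw [Real.sqrt_sq_eq_abs]; simp]
  apply Real.sqrt_le_sqrt
  exact Finset.single_le_sum (f := fun j => ‖x j‖ ^ 2) (fun j _ => by positivity) (Finset.mem_univ i)

-- dist to rounded grid point
lemma dist_grid {d : ℕ} (x : EuclideanSpace ℝ (Fin d)) {ε : ℝ} (hε : 0 < ε) :
    dist x (WithLp.toLp 2 (fun i => ε * (round (x i / ε) : ℝ)) : EuclideanSpace ℝ (Fin d))
      ≤ Real.sqrt d * (ε / 2) := by
  rw [EuclideanSpace.dist_eq]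
  have h1 : ∀ i : Fin d, dist (x i) (ε * (round (x i / ε) : ℝ)) ^ 2 ≤ (ε / 2) ^ 2 := by
    intro i
    have h2 : dist (x i) (ε * (round (x i / ε) : ℝ)) ≤ ε / 2 := by
      rw [Real.dist_eq]
      have h3 : x i - ε * (round (x i / ε) : ℝ) = ε * (x i / ε - round (x i / ε)) := by
        field_simp
      rw [h3, abs_mul, abs_of_pos hε]
      have := abs_sub_round (x i / ε)
      calc ε * |x i / ε - ↑(round (x i / ε))| ≤ ε * (1 / 2) := by
            exact mul_le_mul_of_nonneg_left this hε.le
        _ = ε / 2 := by ring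
    exact pow_le_pow_left₀ dist_nonneg h2 2
  calc Real.sqrt (∑ i, dist (x i) (ε * (round (x i / ε) : ℝ)) ^ 2)
      ≤ Real.sqrt (∑ _i : Fin d, (ε / 2) ^ 2) := Real.sqrt_le_sqrt (Finset.sum_le_sum fun i _ => h1 i)
    _ = Real.sqrt d * (ε / 2) := by
        rw [Finset.sum_const, Finset.card_univ, Fintype.card_fin, nsmul_eq_mul]
        rw [Real.sqrt_mul (by positivity), Real.sqrt_sq (by positivity)]

-- main geometric-measure bound
lemma geo_bound {d : ℕ} (hd : 0 < d) {K : Set (EuclideanSpace ℝ (Fin d))}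
    (hKconv : Convex ℝ K) (hKcl : IsClosed K) {x₀ : EuclideanSpace ℝ (Fin d)} {ρ R' : ℝ}
    (hρ : 0 < ρ) (hball : ball x₀ ρ ⊆ K) (hR' : ∀ x ∈ K, dist x x₀ ≤ R')
    {f : EuclideanSpace ℝ (Fin d) → ENNReal}
    {ν : Measure (EuclideanSpace ℝ (Fin d))} (hν : ν = volume.withDensity f)
    {νm : ENNReal} (hνm1 : νm ≤ 1) (hlow : ∀ x ∈ K, νm ≤ f x)
    {z : EuclideanSpace ℝ (Fin d)} (hz : z ∈ K) {s : ℝ} (hs : 0 < s) :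
    ENNReal.ofReal (νm.toReal * ((ρ / (ρ + R' + 1)) ^ d *
        (volume (ball (0 : EuclideanSpace ℝ (Fin d)) 1)).toReal) * min s (ρ + R' + 1) ^ d)
      ≤ ν (ball z s) := by
  have hR'0 : 0 ≤ R' := le_trans dist_nonneg (hR' z hz)
  have hs₀ : 0 < ρ + R' + 1 := by linarith
  set u := min s (ρ + R' + 1) with hu_def
  have hu : 0 < u := lt_min hs hs₀
  have hus : u ≤ ρ + R' + 1 := min_le_right _ _
  set t := u / (ρ + R' + 1) with ht_def
  have ht0 : 0 < t := div_pos hu hs₀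
  have hsub : ball (z + t • (x₀ - z)) (t * ρ) ⊆ K ∩ ball z s := by
    refine (cone_ball hKconv hρ hball hR' hz hu hus).trans ?_
    exact Set.inter_subset_inter_right _ (ball_subset_ball (min_le_left _ _))
  have heq : volume (ball (z + t • (x₀ - z)) (t * ρ)) =
      ENNReal.ofReal ((t * ρ) ^ d) * volume (ball (0 : EuclideanSpace ℝ (Fin d)) 1) := by
    haveI : Nonempty (Fin d) := ⟨⟨0, hd⟩⟩
    rw [Measure.addHaar_ball _ _ (by positivity : (0:ℝ) ≤ t * ρ), finrank_euclideanSpace,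
      Fintype.card_fin]
  have hvol : ENNReal.ofReal ((t * ρ) ^ d) *
      volume (ball (0 : EuclideanSpace ℝ (Fin d)) 1) ≤ volume (K ∩ ball z s) :=
    heq ▸ measure_mono hsub
  have hfin : νm ≠ ⊤ := (lt_of_le_of_lt hνm1 ENNReal.one_lt_top).ne
  have hvolfin : volume (ball (0 : EuclideanSpace ℝ (Fin d)) 1) ≠ ⊤ := measure_ball_lt_top.ne
  have hprod : νm * (ENNReal.ofReal ((t * ρ) ^ d) *
      volume (ball (0 : EuclideanSpace ℝ (Fin d)) 1)) =
      ENNReal.ofReal (νm.toReal * ((t * ρ) ^ d *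
        (volume (ball (0 : EuclideanSpace ℝ (Fin d)) 1)).toReal)) := by
    rw [ENNReal.ofReal_mul ENNReal.toReal_nonneg, ENNReal.ofReal_mul (by positivity),
      ENNReal.ofReal_toReal hfin, ENNReal.ofReal_toReal hvolfin]
  calc ENNReal.ofReal (νm.toReal * ((ρ / (ρ + R' + 1)) ^ d *
        (volume (ball (0 : EuclideanSpace ℝ (Fin d)) 1)).toReal) * u ^ d)
      = νm * (ENNReal.ofReal ((t * ρ) ^ d) *
          volume (ball (0 : EuclideanSpace ℝ (Fin d)) 1)) := by
        rw [hprod]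
        congr 1
        rw [ht_def]
        field_simp
        ring
    _ ≤ νm * volume (K ∩ ball z s) := mul_le_mul_right hvol _
    _ ≤ ν (ball z s) := nu_lower hKcl hν hlow _ measurableSet_ball

open Finset in
lemma aux_bound {d : ℕ} (hd : 0 < d) {K : Set (EuclideanSpace ℝ (Fin d))}
    {ν : Measure (EuclideanSpace ℝ (Fin d))} [IsProbabilityMeasure ν]
    {s₀ c₅ R₂ : ℝ} (hs₀ : 0 < s₀) (hc₅ : 0 ≤ c₅) (hR₂ : 0 ≤ R₂)
    (hK₂ : ∀ x ∈ K, ‖x‖ ≤ R₂)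
    (hgeo : ∀ z ∈ K, ∀ s : ℝ, 0 < s → ENNReal.ofReal (c₅ * min s s₀ ^ d) ≤ ν (ball z s))
    {Ω : Type} [MeasurableSpace Ω] (P : Measure Ω) [IsProbabilityMeasure P]
    (X : ℕ → Ω → EuclideanSpace ℝ (Fin d)) (hX : ∀ i, Measurable (X i))
    (hindep : ProbabilityTheory.iIndepFun X P)
    (hmap : ∀ i, Measure.map (X i) P = ν)
    (n : ℕ) (r : ℝ) (hr : 0 < r) :
    ∃ G : Set Ω, MeasurableSet G ∧
      (∀ ω ∈ G, K ⊆ ⋃ i ∈ Finset.range n, ball (X i ω) r) ∧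
      P Gᶜ ≤ ENNReal.ofReal ((8 * R₂ * Real.sqrt d / r + 5) ^ d *
        Real.exp (-(n * (c₅ * min (r / 4) s₀ ^ d)))) := by
  classical
  have hsd : 0 < Real.sqrt d := Real.sqrt_pos.2 (by exact_mod_cast hd)
  set ε := r / (4 * Real.sqrt d) with hε_def
  have hε : 0 < ε := by positivity
  set M : ℤ := ⌈R₂ / ε⌉ + 1 with hM_def
  have hceil : (0:ℤ) ≤ ⌈R₂ / ε⌉ := Int.ceil_nonneg (by positivity)
  set y : (Fin d → ℤ) → EuclideanSpace ℝ (Fin d) :=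
    fun k => (WithLp.toLp 2 (fun i => ε * (k i : ℝ)) : EuclideanSpace ℝ (Fin d)) with hy_def
  set F : Finset (Fin d → ℤ) := Fintype.piFinset (fun _ => Finset.Icc (-M) M) with hF_def
  set F' : Finset (Fin d → ℤ) := F.filter (fun k => (K ∩ ball (y k) (r / 4)).Nonempty)
    with hF'_def
  refine ⟨⋂ k ∈ F', ⋃ i ∈ Finset.range n, X i ⁻¹' ball (y k) (r / 2), ?_, ?_, ?_⟩
  · exact Finset.measurableSet_biInter _ fun k _ =>
      Finset.measurableSet_biUnion _ fun i _ => (hX i) measurableSet_ball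
  · -- covering
    intro ω hω x hx
    set k : Fin d → ℤ := fun i => round (x i / ε) with hk_def
    have hdist : dist x (y k) ≤ r / 8 := by
      have h := dist_grid x hε
      have : Real.sqrt d * (ε / 2) = r / 8 := by
        rw [hε_def]; field_simp; ring
      rw [this] at h; exact h
    have hkF : k ∈ F := by
      rw [hF_def, Fintype.mem_piFinset]
      intro i
      rw [Finset.mem_Icc]
      have hxi : |x i| ≤ R₂ := le_trans (coord_le_norm x i) (hK₂ x hx)
      have h1 : |x i / ε| ≤ R₂ / ε := by
        rw [abs_div, abs_of_pos hε]; gcongr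
      rw [abs_le] at h1
      have habs := abs_sub_round (x i / ε)
      rw [abs_le] at habs
      have hc : R₂ / ε ≤ (⌈R₂ / ε⌉ : ℝ) := Int.le_ceil _
      constructor
      · have : (-M : ℝ) ≤ (k i : ℝ) := by
          rw [hM_def, hk_def]; push_cast
          have := habs.2; have := h1.1; linarith
        exact_mod_cast this
      · have : (k i : ℝ) ≤ (M : ℝ) := by
          rw [hM_def, hk_def]; push_cast
          have := habs.1; have := h1.2; linarith
        exact_mod_cast this
    have hkF' : k ∈ F' := by
      rw [hF'_def, Finset.mem_filter]
      exact ⟨hkF, ⟨x, hx, mem_ball.2 (lt_of_le_of_lt hdist (by linarith))⟩⟩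
    have hω' := Set.mem_iInter₂.1 hω k hkF'
    obtain ⟨i, hi, hXi⟩ := Set.mem_iUnion₂.1 hω'
    refine Set.mem_iUnion₂.2 ⟨i, hi, ?_⟩
    have hXi' : dist (X i ω) (y k) < r / 2 := mem_ball.1 (Set.mem_preimage.1 hXi)
    rw [mem_ball]
    have h := dist_triangle_right x (X i ω) (y k)
    linarith
  · -- probability bound
    set q : ENNReal := ENNReal.ofReal (c₅ * min (r / 4) s₀ ^ d) with hq_def
    have hqr : (0:ℝ) ≤ c₅ * min (r / 4) s₀ ^ d := by
      have : (0:ℝ) < min (r / 4) s₀ := lt_min (by linarith) hs₀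
      positivity
    -- each grid cell bound
    have hcell : ∀ k ∈ F', P ((⋃ i ∈ Finset.range n, X i ⁻¹' ball (y k) (r / 2))ᶜ)
        ≤ (1 - q) ^ n := by
      intro k hk
      obtain ⟨z, hzK, hzball⟩ := (Finset.mem_filter.1 hk).2
      have hνball : q ≤ ν (ball (y k) (r / 2)) := by
        refine le_trans (hgeo z hzK (r / 4) (by linarith)) (measure_mono ?_)
        intro w hw
        rw [mem_ball] at hw hzball ⊢
        calc dist w (y k) ≤ dist w z + dist z (y k) := dist_triangle _ _ _
          _ < r / 4 + r / 4 := add_lt_add hw hzball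
          _ = r / 2 := by ring
      have hcompl : (⋃ i ∈ Finset.range n, X i ⁻¹' ball (y k) (r / 2))ᶜ
          = ⋂ i ∈ Finset.range n, X i ⁻¹' (ball (y k) (r / 2))ᶜ := by
        rw [Set.compl_iUnion₂]
        simp only [Set.preimage_compl]
      rw [hcompl]
      have hprod : P (⋂ i ∈ Finset.range n, X i ⁻¹' (ball (y k) (r / 2))ᶜ)
          = ∏ i ∈ Finset.range n, P (X i ⁻¹' (ball (y k) (r / 2))ᶜ) :=
        hindep.meas_biInter fun i _ => ⟨(ball (y k) (r / 2))ᶜ, measurableSet_ball.compl, rfl⟩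
      rw [hprod]
      have hone : ∀ i, P (X i ⁻¹' (ball (y k) (r / 2))ᶜ) ≤ 1 - q := by
        intro i
        have : P (X i ⁻¹' (ball (y k) (r / 2))ᶜ) = ν ((ball (y k) (r / 2))ᶜ) := by
          rw [← hmap i, Measure.map_apply (hX i) measurableSet_ball.compl]
        rw [this, prob_compl_eq_one_sub measurableSet_ball]
        exact tsub_le_tsub_left hνball 1
      calc ∏ i ∈ Finset.range n, P (X i ⁻¹' (ball (y k) (r / 2))ᶜ)
          ≤ ∏ _i ∈ Finset.range n, (1 - q) := Finset.prod_le_prod' fun i _ => hone i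
        _ = (1 - q) ^ n := by rw [Finset.prod_const, Finset.card_range]
    -- union bound
    have hGc : P ((⋂ k ∈ F', ⋃ i ∈ Finset.range n, X i ⁻¹' ball (y k) (r / 2))ᶜ)
        ≤ (F.card : ENNReal) * (1 - q) ^ n := by
      rw [Set.compl_iInter₂]
      refine le_trans (measure_biUnion_finset_le F' _) ?_
      calc ∑ k ∈ F', P ((⋃ i ∈ Finset.range n, X i ⁻¹' ball (y k) (r / 2))ᶜ)
          ≤ ∑ _k ∈ F', (1 - q) ^ n := Finset.sum_le_sum hcell
        _ = (F'.card : ENNReal) * (1 - q) ^ n := by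
            rw [Finset.sum_const, nsmul_eq_mul]
        _ ≤ (F.card : ENNReal) * (1 - q) ^ n := by
            gcongr
            · exact Finset.filter_subset _ _
    refine le_trans hGc ?_
    -- cardinality bound
    have hcard : (F.card : ℝ) ≤ (8 * R₂ * Real.sqrt d / r + 5) ^ d := by
      have hFcard : F.card = ((M + 1 - -M).toNat) ^ d := by
        rw [hF_def, Fintype.card_piFinset]
        simp [Int.card_Icc]
      have htoNat : (((M + 1 - -M).toNat : ℕ) : ℝ) = 2 * (M : ℝ) + 1 := by
        have h2 : M + 1 - -M = 2 * M + 1 := by ring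
        have h3 : ((2 * M + 1).toNat : ℤ) = 2 * M + 1 := Int.toNat_of_nonneg (by omega)
        rw [h2]
        exact_mod_cast h3
      have hceil2 : (⌈R₂ / ε⌉ : ℝ) < R₂ / ε + 1 := Int.ceil_lt_add_one _
      have hεval : R₂ / ε = 4 * R₂ * Real.sqrt d / r := by
        rw [hε_def]; field_simp
      have hMle : 2 * (M : ℝ) + 1 ≤ 8 * R₂ * Real.sqrt d / r + 5 := by
        have h4 : 2 * (M : ℝ) + 1 ≤ 2 * (R₂ / ε) + 5 := by
          rw [hM_def]; push_cast; linarith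
        calc 2 * (M : ℝ) + 1 ≤ 2 * (R₂ / ε) + 5 := h4
          _ = 8 * R₂ * Real.sqrt d / r + 5 := by rw [hεval]; ring
      have hM0 : (0:ℝ) ≤ 2 * (M : ℝ) + 1 := by
        have : (0:ℤ) ≤ 2 * M + 1 := by omega
        exact_mod_cast this
      rw [hFcard]
      push_cast [htoNat]
      exact pow_le_pow_left₀ hM0 hMle d
    have hpow : (1 - q) ^ n ≤ ENNReal.ofReal (Real.exp (-(n * (c₅ * min (r / 4) s₀ ^ d)))) := by
      have h1 : 1 - q ≤ ENNReal.ofReal (Real.exp (-(c₅ * min (r / 4) s₀ ^ d))) := by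
        rw [hq_def, ← ENNReal.ofReal_one, ← ENNReal.ofReal_sub _ hqr]
        exact ENNReal.ofReal_le_ofReal
          (by linarith [Real.add_one_le_exp (-(c₅ * min (r / 4) s₀ ^ d))])
      calc (1 - q) ^ n ≤ ENNReal.ofReal (Real.exp (-(c₅ * min (r / 4) s₀ ^ d))) ^ n :=
            pow_le_pow_left' h1 n
        _ = ENNReal.ofReal (Real.exp (-(c₅ * min (r / 4) s₀ ^ d)) ^ n) :=
            (ENNReal.ofReal_pow (Real.exp_nonneg _) n).symm
        _ = ENNReal.ofReal (Real.exp (-(n * (c₅ * min (r / 4) s₀ ^ d)))) := by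
            rw [← Real.exp_nat_mul]
            ring_nf
    calc (F.card : ENNReal) * (1 - q) ^ n
        ≤ ENNReal.ofReal ((8 * R₂ * Real.sqrt d / r + 5) ^ d) *
          ENNReal.ofReal (Real.exp (-(n * (c₅ * min (r / 4) s₀ ^ d)))) := by
          refine mul_le_mul' ?_ hpow
          rw [← ENNReal.ofReal_natCast]
          exact ENNReal.ofReal_le_ofReal hcard
      _ = ENNReal.ofReal ((8 * R₂ * Real.sqrt d / r + 5) ^ d *
          Real.exp (-(n * (c₅ * min (r / 4) s₀ ^ d)))) := by
          rw [← ENNReal.ofReal_mul (by positivity)]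

set_option maxHeartbeats 1000000 in
/-- Covering lemma: for a convex body `K` and a probability measure with density uniformly
positive on `K` (and vanishing outside `K`), there is a constant `δ` such that whenever
`r_n ≥ δ (ln n / n)^{1/d}`, the balls of radius `r_n` around `n` i.i.d. sample points a.a.s.
cover `K`. -/
theorem stmt_9 (d : ℕ) (hd : 0 < d) (K : Set (EuclideanSpace ℝ (Fin d)))
    (hKconv : Convex ℝ K) (hKcomp : IsCompact K) (hKint : (interior K).Nonempty)
    (f : EuclideanSpace ℝ (Fin d) → ENNReal) (hfmeas : Measurable f)
    (ν : Measure (EuclideanSpace ℝ (Fin d))) (hν : ν = volume.withDensity f)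
    (hprob : IsProbabilityMeasure ν)
    (hsupp : ∀ x, x ∉ K → f x = 0)
    (νmin : ENNReal) (hνmin : 0 < νmin) (hlow : ∀ x ∈ K, νmin ≤ f x) :
    ∃ δ : ℝ, 0 < δ ∧
      ∀ (Ω : Type) (mΩ : MeasurableSpace Ω) (P : Measure Ω), IsProbabilityMeasure P →
      ∀ X : ℕ → Ω → EuclideanSpace ℝ (Fin d), (∀ i, Measurable (X i)) →
      ProbabilityTheory.iIndepFun X P →
      (∀ i, Measure.map (X i) P = ν) →
      ∀ r : ℕ → ℝ, (∀ n : ℕ, δ * (Real.log n / n) ^ ((1 : ℝ) / d) ≤ r n) →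
      Tendsto (fun n : ℕ => P {ω | K ⊆ ⋃ i ∈ Finset.range n, ball (X i ω) (r n)})
        atTop (nhds 1) := by
  haveI := hprob
  -- interior point and inner ball
  obtain ⟨x₀, hx₀⟩ := hKint
  obtain ⟨ρ, hρ, hball⟩ : ∃ ρ > 0, ball x₀ ρ ⊆ K := by
    rcases Metric.isOpen_iff.1 isOpen_interior x₀ hx₀ with ⟨ρ, hρ, h⟩
    exact ⟨ρ, hρ, h.trans interior_subset⟩
  have hx₀K : x₀ ∈ K := interior_subset hx₀
  -- outer radius around x₀
  obtain ⟨R', hR'⟩ : ∃ R', ∀ x ∈ K, dist x x₀ ≤ R' := by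
    obtain ⟨R', hR'⟩ := hKcomp.isBounded.subset_closedBall x₀
    exact ⟨R', fun x hx => mem_closedBall.1 (hR' hx)⟩
  -- outer radius around 0
  obtain ⟨R₂, hR₂0, hR₂⟩ : ∃ R₂, 0 ≤ R₂ ∧ ∀ x ∈ K, ‖x‖ ≤ R₂ := by
    obtain ⟨R, hR⟩ := hKcomp.isBounded.subset_closedBall 0
    exact ⟨max R 0, le_max_right _ _, fun x hx =>
      le_trans (mem_closedBall_zero_iff.1 (hR hx)) (le_max_left _ _)⟩
  -- constants
  set νm : ENNReal := min νmin 1 with hνm_def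
  have hνm1 : νm ≤ 1 := min_le_right _ _
  have hνmpos : 0 < νm.toReal :=
    ENNReal.toReal_pos (lt_min hνmin zero_lt_one).ne'
      (lt_of_le_of_lt hνm1 ENNReal.one_lt_top).ne
  have hlow' : ∀ x ∈ K, νm ≤ f x := fun x hx => le_trans (min_le_left _ _) (hlow x hx)
  set s₀ : ℝ := ρ + R' + 1 with hs₀_def
  have hR'0 : 0 ≤ R' := le_trans dist_nonneg (hR' x₀ hx₀K)
  have hs₀ : 0 < s₀ := by rw [hs₀_def]; linarith
  set ω₁ : ℝ := (volume (ball (0 : EuclideanSpace ℝ (Fin d)) 1)).toReal with hω₁_def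
  have hω₁ : 0 < ω₁ :=
    ENNReal.toReal_pos (measure_ball_pos _ _ one_pos).ne' measure_ball_lt_top.ne
  set c₅ : ℝ := νm.toReal * ((ρ / s₀) ^ d * ω₁) with hc₅_def
  have hc₅ : 0 < c₅ := by
    rw [hc₅_def]
    have : 0 < ρ / s₀ := div_pos hρ hs₀
    positivity
  have hgeo : ∀ z ∈ K, ∀ s : ℝ, 0 < s →
      ENNReal.ofReal (c₅ * min s s₀ ^ d) ≤ ν (ball z s) := by
    intro z hz s hs
    have := geo_bound hd hKconv hKcomp.isClosed hρ hball hR' hν hνm1 hlow' hz hs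
    rw [hc₅_def, hs₀_def]
    rw [hω₁_def] at *
    convert this using 3
  -- choose δ
  set δ : ℝ := 4 * (2 / c₅) ^ (1 / (d:ℝ)) with hδ_def
  have hδpos : 0 < δ := by
    rw [hδ_def]
    have : 0 < (2 / c₅) ^ (1 / (d:ℝ)) := Real.rpow_pos_of_pos (by positivity) _
    linarith
  have hδkey : c₅ * (δ / 4) ^ d = 2 := by
    rw [hδ_def]
    have h4 : 4 * (2 / c₅) ^ (1 / (d:ℝ)) / 4 = (2 / c₅) ^ (1 / (d:ℝ)) := by ring
    rw [h4, ← Real.rpow_natCast ((2 / c₅) ^ (1 / (d:ℝ))) d, ← Real.rpow_mul (by positivity)]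
    rw [one_div_mul_cancel (by exact_mod_cast hd.ne' : (d:ℝ) ≠ 0), Real.rpow_one]
    field_simp
  refine ⟨δ, hδpos, ?_⟩
  intro Ω mΩ P hP X hX hindep hmap r hrlow
  haveI := hP
  set a : ℕ → ℝ := fun n => (Real.log n / n) ^ ((1:ℝ) / d) with ha_def
  set C₇ : ℝ := 8 * R₂ * Real.sqrt d / δ + 5 with hC₇_def
  have hC₇ : 0 < C₇ := by
    rw [hC₇_def]
    have h1 : 0 ≤ 8 * R₂ * Real.sqrt d / δ := by positivity
    linarith
  -- a n tends to zero
  have ha0 : Tendsto a atTop (nhds 0) := by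
    have hlog : Tendsto (fun n : ℕ => Real.log n / n) atTop (nhds 0) :=
      (Real.isLittleO_log_id_atTop.tendsto_div_nhds_zero).comp tendsto_natCast_atTop_atTop
    have hc : ContinuousAt (fun x : ℝ => x ^ ((1:ℝ) / d)) 0 :=
      Real.continuousAt_rpow_const 0 _ (Or.inr (by positivity))
    have h0' : ((0:ℝ) ^ ((1:ℝ)/d)) = 0 := Real.zero_rpow (by positivity : (0:ℝ) < (1:ℝ)/d).ne'
    have := hc.tendsto.comp hlog
    rw [Function.comp_def, h0'] at this
    exact this
  -- eventual lower bound on covering probability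
  have key : ∀ᶠ n : ℕ in atTop,
      1 - ENNReal.ofReal (C₇ ^ d / n) ≤
        P {ω | K ⊆ ⋃ i ∈ Finset.range n, ball (X i ω) (r n)} := by
    have hev := (eventually_ge_atTop 3).and
      (ha0.eventually (gt_mem_nhds (by positivity : (0:ℝ) < 4 * s₀ / δ)))
    filter_upwards [hev] with n hn
    obtain ⟨hn3, hansmall⟩ := hn
    have hnpos : (0:ℝ) < n := by
      have : (3:ℝ) ≤ n := by exact_mod_cast hn3
      linarith
    have hlog1 : 1 ≤ Real.log n := by
      rw [Real.le_log_iff_exp_le hnpos]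
      have h9 := Real.exp_one_lt_d9
      have : (3:ℝ) ≤ n := by exact_mod_cast hn3
      linarith
    have hloglen : Real.log n ≤ n := by
      have := Real.log_le_sub_one_of_pos hnpos
      linarith
    have hanpos : 0 < a n := Real.rpow_pos_of_pos (div_pos (by linarith) hnpos) _
    have han1 : a n ≤ 1 :=
      Real.rpow_le_one (by positivity) (div_le_one_of_le₀ hloglen hnpos.le) (by positivity)
    have hand : a n ^ d = Real.log n / n := by
      rw [ha_def]
      rw [← Real.rpow_natCast ((Real.log n / n) ^ ((1:ℝ)/d)) d,
        ← Real.rpow_mul (by positivity),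
        one_div_mul_cancel (by exact_mod_cast hd.ne' : (d:ℝ) ≠ 0), Real.rpow_one]
    have hrlown : δ * a n ≤ r n := hrlow n
    have hrn : 0 < r n := lt_of_lt_of_le (by positivity) hrlown
    obtain ⟨G, hGmeas, hGcov, hGbound⟩ :=
      aux_bound hd hs₀ hc₅.le hR₂0 hR₂ hgeo P X hX hindep hmap n (r n) hrn
    -- real-number bound
    have h_min : δ * a n / 4 ≤ min (r n / 4) s₀ := by
      refine le_min (by linarith) ?_
      have heq : δ * (4 * s₀ / δ) = 4 * s₀ := by field_simp
      have h2 : δ * a n < 4 * s₀ := by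
        have := mul_lt_mul_of_pos_left hansmall hδpos
        linarith
      linarith
    have hqr : 2 * (Real.log n / n) ≤ c₅ * min (r n / 4) s₀ ^ d := by
      have h1 : (δ * a n / 4) ^ d ≤ min (r n / 4) s₀ ^ d :=
        pow_le_pow_left₀ (by positivity) h_min d
      have h2 : (δ * a n / 4) ^ d = (δ / 4) ^ d * a n ^ d := by
        rw [← mul_pow]; ring_nf
      have h3 : c₅ * ((δ / 4) ^ d * a n ^ d) = 2 * (Real.log n / n) := by
        rw [← mul_assoc, hδkey, hand]
      nlinarith [mul_le_mul_of_nonneg_left h1 hc₅.le]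
    have hexp : Real.exp (-(n * (c₅ * min (r n / 4) s₀ ^ d))) ≤ ((n:ℝ) * n)⁻¹ := by
      have h1 : 2 * Real.log n ≤ n * (c₅ * min (r n / 4) s₀ ^ d) := by
        have := mul_le_mul_of_nonneg_left hqr hnpos.le
        calc 2 * Real.log n = (n:ℝ) * (2 * (Real.log n / n)) := by field_simp
          _ ≤ n * (c₅ * min (r n / 4) s₀ ^ d) := this
      calc Real.exp (-(n * (c₅ * min (r n / 4) s₀ ^ d)))
          ≤ Real.exp (-(2 * Real.log n)) := Real.exp_le_exp.2 (by linarith)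
        _ = ((n:ℝ) * n)⁻¹ := by
            rw [Real.exp_neg, two_mul, Real.exp_add, Real.exp_log hnpos]
    have hNb : (8 * R₂ * Real.sqrt d / r n + 5) ^ d ≤ C₇ ^ d * n := by
      have hsd : (0:ℝ) ≤ 8 * R₂ * Real.sqrt d := by positivity
      have h1 : 8 * R₂ * Real.sqrt d / r n ≤ 8 * R₂ * Real.sqrt d / (δ * a n) := by
        gcongr
      have h2 : 8 * R₂ * Real.sqrt d / (δ * a n) + 5 ≤ C₇ / a n := by
        rw [hC₇_def, add_div]
        have e1 : 8 * R₂ * Real.sqrt d / (δ * a n) = 8 * R₂ * Real.sqrt d / δ / a n := by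
          rw [div_div]
        rw [e1]
        have e2 : (5:ℝ) ≤ 5 / a n := by
          rw [le_div_iff₀ hanpos]
          linarith [mul_le_mul_of_nonneg_left han1 (by norm_num : (0:ℝ) ≤ 5)]
        linarith
      have h3 : (8 * R₂ * Real.sqrt d / r n + 5) ^ d ≤ (C₇ / a n) ^ d := by
        apply pow_le_pow_left₀ (by positivity)
        linarith
      have h4 : (C₇ / a n) ^ d = C₇ ^ d * ((n:ℝ) / Real.log n) := by
        rw [div_pow, hand, div_div_eq_mul_div, mul_div_assoc]
      have h5 : (n:ℝ) / Real.log n ≤ n := div_le_self hnpos.le hlog1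
      calc (8 * R₂ * Real.sqrt d / r n + 5) ^ d ≤ (C₇ / a n) ^ d := h3
        _ = C₇ ^ d * ((n:ℝ) / Real.log n) := h4
        _ ≤ C₇ ^ d * n := by
            have : (0:ℝ) ≤ C₇ ^ d := by positivity
            nlinarith
    have hreal : (8 * R₂ * Real.sqrt d / r n + 5) ^ d *
        Real.exp (-(n * (c₅ * min (r n / 4) s₀ ^ d))) ≤ C₇ ^ d / n := by
      have h1 : (8 * R₂ * Real.sqrt d / r n + 5) ^ d *
          Real.exp (-(n * (c₅ * min (r n / 4) s₀ ^ d))) ≤ (C₇ ^ d * n) * ((n:ℝ) * n)⁻¹ := by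
        apply mul_le_mul hNb hexp (Real.exp_nonneg _) (by positivity)
      have h2 : (C₇ ^ d * n) * ((n:ℝ) * n)⁻¹ = C₇ ^ d / n := by
        rw [mul_inv, ← mul_assoc, mul_assoc (C₇ ^ d), mul_inv_cancel₀ hnpos.ne', mul_one,
          div_eq_mul_inv]
      linarith
    -- ENNReal chain
    have hsubset : G ⊆ {ω | K ⊆ ⋃ i ∈ Finset.range n, ball (X i ω) (r n)} :=
      fun ω hω => hGcov ω hω
    calc 1 - ENNReal.ofReal (C₇ ^ d / n)
        ≤ 1 - P Gᶜ := by
          refine tsub_le_tsub_left (le_trans hGbound ?_) 1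
          exact ENNReal.ofReal_le_ofReal hreal
      _ = P G := by
          rw [prob_compl_eq_one_sub hGmeas]
          exact ENNReal.sub_sub_cancel ENNReal.one_ne_top prob_le_one
      _ ≤ P {ω | K ⊆ ⋃ i ∈ Finset.range n, ball (X i ω) (r n)} := measure_mono hsubset
  -- squeeze
  have hlow_tendsto : Tendsto (fun n : ℕ => 1 - ENNReal.ofReal (C₇ ^ d / n)) atTop (nhds 1) := by
    have h0 : Tendsto (fun n : ℕ => ENNReal.ofReal (C₇ ^ d / n)) atTop (nhds 0) := by
      have h := ENNReal.tendsto_ofReal (tendsto_const_div_atTop_nhds_zero_nat (C₇ ^ d))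
      simpa using h
    have := ENNReal.Tendsto.sub (tendsto_const_nhds (x := (1:ENNReal))) h0
      (Or.inl ENNReal.one_ne_top)
    simpa using this
  refine tendsto_of_tendsto_of_tendsto_of_le_of_le' hlow_tendsto tendsto_const_nhds key ?_
  exact Eventually.of_forall fun n => prob_le_one
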